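/- arXiv:1707.02582 — 2 statements merged into one kernel-verified Lean document; each statement's English description precedes it below -/
import Mathlib

section
/- Let A be the algebra over the bigraded commutative ring R = F_2[a,u] given by A = R[tau_0, tau_1, ..., xi_1, xi_2, ...]/(tau_i^2 = (u + a*tau_0)*xi_{i+1} + a*tau_{i+1} for all i >= 0). Then A is a free R-module, with basis given by monomials tau_0^{e_0} tau_1^{e_1} ... xi_1^{k_1} xi_2^{k_2} ... with e_i in {0,1} and k_i >= 0. -/
/-!
STATEMENT 6 (Hu–Kriz presentation): let `R = F₂[a,u]` and
`A = R[τ₀, τ₁, …, ξ₁, ξ₂, …]/(τᵢ² = (u + a τ₀) ξ_{i+1} + a τ_{i+1})`.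
Then `A` is a free `R`-module with basis the admissible monomials
`τ₀^{ε₀} τ₁^{ε₁} ⋯ ξ₁^{k₁} ξ₂^{k₂} ⋯` with `εᵢ ∈ {0,1}` and `kᵢ ≥ 0`.
Here `tauXi (Sum.inl i) = τᵢ` and `tauXi (Sum.inr i) = ξ_{i+1}`.
-/

open MvPolynomial

noncomputable section

abbrev Rcoef : Type := MvPolynomial (Fin 2) (ZMod 2)

abbrev aC : Rcoef := X 0
abbrev uC : Rcoef := X 1

/-- Polynomial ring `R[τ₀, τ₁, …, ξ₁, ξ₂, …]`. -/
abbrev Ppoly : Type := MvPolynomial (ℕ ⊕ ℕ) Rcoef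

def tau (i : ℕ) : Ppoly := X (Sum.inl i)

/-- `xiv i` models `ξ_{i+1}`. -/
def xiv (i : ℕ) : Ppoly := X (Sum.inr i)

/-- The Hu–Kriz relation `τᵢ² - ((u + a τ₀) ξ_{i+1} + a τ_{i+1})`. -/
def huKrizRel (i : ℕ) : Ppoly :=
  tau i ^ 2 - ((C uC + C aC * tau 0) * xiv i + C aC * tau (i + 1))

abbrev huKrizIdeal : Ideal Ppoly := Ideal.span (Set.range huKrizRel)

/-- The quotient algebra `A`. -/
abbrev Aalg : Type := Ppoly ⧸ huKrizIdeal

namespace HK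

abbrev V : Type := (ℕ ⊕ ℕ) →₀ ℕ
abbrev S : Type := {e : ℕ →₀ ℕ // ∀ i, e i ≤ 1} × (ℕ →₀ ℕ)
abbrev M : Type := S →₀ Rcoef

abbrev d2 (i : ℕ) : V := Finsupp.single (Sum.inl i) 2
abbrev ξ1 (i : ℕ) : V := Finsupp.single (Sum.inr i) 1
abbrev t1 (i : ℕ) : V := Finsupp.single (Sum.inl i) 1

/-- the total degree in the τ variables -/
def τdeg (σ : V) : ℕ := σ.sum fun x n => Sum.elim (fun _ => n) (fun _ => 0) x

lemma τdeg_add (σ τ : V) : τdeg (σ + τ) = τdeg σ + τdeg τ := by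
  unfold τdeg
  apply Finsupp.sum_add_index' <;> intro a <;> rcases a with i | i <;> simp

lemma τdeg_single_inl (i n : ℕ) : τdeg (Finsupp.single (Sum.inl i) n : V) = n := by
  unfold τdeg
  rw [Finsupp.sum_single_index] <;> simp

lemma τdeg_single_inr (i n : ℕ) : τdeg (Finsupp.single (Sum.inr i) n : V) = 0 := by
  unfold τdeg
  rw [Finsupp.sum_single_index] <;> simp

lemma sub_add_cancel' {σ : V} {i : ℕ} (h : 2 ≤ σ (Sum.inl i)) :
    σ - d2 i + d2 i = σ :=
  tsub_add_cancel_of_le (Finsupp.single_le_iff.mpr h)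

lemma τdeg_sub_single {σ : V} {i : ℕ} (h : 2 ≤ σ (Sum.inl i)) :
    τdeg (σ - d2 i) + 2 = τdeg σ := by
  conv_rhs => rw [← sub_add_cancel' h]
  rw [τdeg_add, τdeg_single_inl]

lemma τdeg_lt {σ : V} {i : ℕ} (h : 2 ≤ σ (Sum.inl i)) (B : V) (hB : τdeg B ≤ 1) :
    τdeg (σ - d2 i + B) < τdeg σ := by
  have := τdeg_sub_single h
  rw [τdeg_add]
  omega

lemma sub_apply_ne {σ : V} {x : ℕ ⊕ ℕ} {i : ℕ} (hxy : Sum.inl i ≠ x) :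
    (σ - d2 i) x = σ x := by
  rw [Finsupp.tsub_apply, Finsupp.single_apply, if_neg hxy, Nat.sub_zero]

lemma apply_sub_ne {σ : V} {x : ℕ ⊕ ℕ} {i : ℕ} (hxy : Sum.inl i ≠ x) (B : V) :
    (σ - d2 i + B) x = σ x + B x := by
  rw [Finsupp.add_apply, sub_apply_ne hxy]

lemma fsub_exchange (σ B : V) {i : ℕ} (h : 2 ≤ σ (Sum.inl i)) :
    σ + B - d2 i = σ - d2 i + B := by
  ext x
  simp only [Finsupp.add_apply, Finsupp.tsub_apply, Finsupp.single_apply]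
  rcases eq_or_ne (Sum.inl i : ℕ ⊕ ℕ) x with rfl | hx
  · split_ifs with hc
    · omega
    · exact absurd rfl hc
  · simp [hx]

def splitL (σ : V) : ℕ →₀ ℕ := σ.comapDomain Sum.inl Sum.inl_injective.injOn
def splitR (σ : V) : ℕ →₀ ℕ := σ.comapDomain Sum.inr Sum.inr_injective.injOn

def mrg (p : S) : V := p.1.1.mapDomain Sum.inl + p.2.mapDomain Sum.inr

lemma mrg_inl (p : S) (i : ℕ) : mrg p (Sum.inl i) = p.1.1 i := by
  unfold mrg
  rw [Finsupp.add_apply, Finsupp.mapDomain_apply Sum.inl_injective,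
    Finsupp.mapDomain_notin_range _ _ (by simp), add_zero]

lemma mrg_inr (p : S) (i : ℕ) : mrg p (Sum.inr i) = p.2 i := by
  unfold mrg
  rw [Finsupp.add_apply, Finsupp.mapDomain_apply Sum.inr_injective,
    Finsupp.mapDomain_notin_range _ _ (by simp), zero_add]

lemma splitL_mrg (p : S) : splitL (mrg p) = p.1.1 := by
  ext i; simp [splitL, Finsupp.comapDomain_apply, mrg_inl]

lemma splitR_mrg (p : S) : splitR (mrg p) = p.2 := by
  ext i; simp [splitR, Finsupp.comapDomain_apply, mrg_inr]

lemma mrg_split (σ : V) (h : ∀ i, splitL σ i ≤ 1) :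
    mrg (⟨⟨splitL σ, h⟩, splitR σ⟩ : S) = σ := by
  ext x
  rcases x with i | i
  · rw [mrg_inl]; simp [splitL, Finsupp.comapDomain_apply]
  · rw [mrg_inr]; simp [splitR, Finsupp.comapDomain_apply]

open Classical in
/-- normal form of a monomial -/
def nf (σ : V) : M :=
  if h : ∃ i, 2 ≤ σ (Sum.inl i) then
    uC • nf (σ - d2 (Nat.find h) + ξ1 (Nat.find h))
      + aC • nf (σ - d2 (Nat.find h) + (ξ1 (Nat.find h) + t1 0))
      + aC • nf (σ - d2 (Nat.find h) + t1 (Nat.find h + 1))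
  else
    Finsupp.single (⟨splitL σ, fun i => by
      have hh : ¬ 2 ≤ σ (Sum.inl i) := fun hc => h ⟨i, hc⟩
      simp only [splitL, Finsupp.comapDomain_apply]
      omega⟩, splitR σ) 1
termination_by τdeg σ
decreasing_by
  · exact τdeg_lt (Nat.find_spec h) _ (by simp [τdeg_single_inr])
  · exact τdeg_lt (Nat.find_spec h) _
      (by simp [τdeg_add, τdeg_single_inr, τdeg_single_inl])
  · exact τdeg_lt (Nat.find_spec h) _ (by simp [τdeg_single_inl])

/-- one reduction step -/
def red (σ : V) (i : ℕ) : M :=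
  uC • nf (σ + ξ1 i) + aC • nf (σ + (ξ1 i + t1 0)) + aC • nf (σ + t1 (i + 1))

lemma red_def (σ : V) (i : ℕ) : red σ i =
    uC • nf (σ + ξ1 i) + aC • nf (σ + (ξ1 i + t1 0)) + aC • nf (σ + t1 (i + 1)) := rfl

lemma nf_of_find {σ : V} (h : ∃ i, 2 ≤ σ (Sum.inl i)) :
    nf σ = red (σ - d2 (Nat.find h)) (Nat.find h) := by
  rw [nf, dif_pos h, red_def]

lemma nf_of_admissible {σ : V} (h : ¬ ∃ i, 2 ≤ σ (Sum.inl i))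
    (h' : ∀ i, splitL σ i ≤ 1) :
    nf σ = Finsupp.single (⟨splitL σ, h'⟩, splitR σ) 1 := by
  rw [nf, dif_neg h]

lemma red_red (ρ : V) (j i : ℕ) :
    uC • red (ρ + ξ1 j) i + aC • red (ρ + (ξ1 j + t1 0)) i + aC • red (ρ + t1 (j + 1)) i
      = uC • red (ρ + ξ1 i) j + aC • red (ρ + (ξ1 i + t1 0)) j
        + aC • red (ρ + t1 (i + 1)) j := by
  simp only [red_def, smul_add, smul_smul]
  have harg : ∀ A B : V, ρ + A + B = ρ + B + A := fun A B => add_right_comm ρ A B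
  rw [harg (ξ1 j) (ξ1 i), harg (ξ1 j) (ξ1 i + t1 0), harg (ξ1 j) (t1 (i + 1)),
    harg (ξ1 j + t1 0) (ξ1 i), harg (ξ1 j + t1 0) (ξ1 i + t1 0),
    harg (ξ1 j + t1 0) (t1 (i + 1)), harg (t1 (j + 1)) (ξ1 i),
    harg (t1 (j + 1)) (ξ1 i + t1 0), harg (t1 (j + 1)) (t1 (i + 1))]
  rw [mul_comm aC uC]
  abel

/-- confluence: reducing at any admissible spot computes the normal form -/
lemma nf_red (σ : V) (i : ℕ) (hi : 2 ≤ σ (Sum.inl i)) :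
    nf σ = red (σ - d2 i) i := by
  suffices H : ∀ n (σ : V) (i : ℕ), τdeg σ ≤ n → 2 ≤ σ (Sum.inl i) →
      nf σ = red (σ - d2 i) i from H (τdeg σ) σ i le_rfl hi
  clear hi σ i
  intro n
  induction n with
  | zero =>
    intro σ i h0 hi
    have := τdeg_sub_single hi
    omega
  | succ n IH =>
    intro σ i hτ hi
    have hex : ∃ k, 2 ≤ σ (Sum.inl k) := ⟨i, hi⟩
    have hj2 : 2 ≤ σ (Sum.inl (Nat.find hex)) := Nat.find_spec hex
    rcases eq_or_ne (Nat.find hex) i with heq | hne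
    · rw [nf_of_find hex, heq]
    · set j := Nat.find hex with hj
      have hij : (Sum.inl i : ℕ ⊕ ℕ) ≠ Sum.inl j := by
        simp only [ne_eq, Sum.inl.injEq]
        exact fun hc => hne (hc.symm)
      have hji : (Sum.inl j : ℕ ⊕ ℕ) ≠ Sum.inl i := hij.symm
      have hd : τdeg (σ - d2 j) + 2 = τdeg σ := τdeg_sub_single hj2
      have hd' : τdeg (σ - d2 i) + 2 = τdeg σ := τdeg_sub_single hi
      have hB : ∀ B : V, τdeg B ≤ 1 → nf (σ - d2 j + B) = red (σ - d2 j + B - d2 i) i := by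
        intro B hBτ
        refine IH _ _ ?_ ?_
        · rw [τdeg_add]; omega
        · rw [apply_sub_ne hji B]; omega
      have hA : ∀ A : V, τdeg A ≤ 1 → nf (σ - d2 i + A) = red (σ - d2 i + A - d2 j) j := by
        intro A hAτ
        refine IH _ _ ?_ ?_
        · rw [τdeg_add]; omega
        · rw [apply_sub_ne hij A]; omega
      have hsubi : 2 ≤ (σ - d2 j) (Sum.inl i) := by rw [sub_apply_ne hji]; omega
      have hsubj : 2 ≤ (σ - d2 i) (Sum.inl j) := by rw [sub_apply_ne hij]; omega
      have hsub : ∀ B : V, σ - d2 j + B - d2 i = (σ - d2 j - d2 i) + B := by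
        intro B; exact fsub_exchange _ B hsubi
      have hsub' : ∀ A : V, σ - d2 i + A - d2 j = (σ - d2 j - d2 i) + A := by
        intro A
        rw [fsub_exchange _ A hsubj, tsub_tsub, tsub_tsub, add_comm (d2 i) (d2 j)]
      calc nf σ = red (σ - d2 j) j := by rw [nf_of_find hex, ← hj]
        _ = uC • red ((σ - d2 j - d2 i) + ξ1 j) i
              + aC • red ((σ - d2 j - d2 i) + (ξ1 j + t1 0)) i
              + aC • red ((σ - d2 j - d2 i) + t1 (j + 1)) i := by
            rw [red_def,
              hB _ (by simp [τdeg_single_inr]),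
              hB _ (by simp [τdeg_add, τdeg_single_inr, τdeg_single_inl]),
              hB _ (by simp [τdeg_single_inl]),
              hsub, hsub, hsub]
        _ = uC • red ((σ - d2 j - d2 i) + ξ1 i) j
              + aC • red ((σ - d2 j - d2 i) + (ξ1 i + t1 0)) j
              + aC • red ((σ - d2 j - d2 i) + t1 (i + 1)) j := red_red _ j i
        _ = red (σ - d2 i) i := by
            rw [red_def (σ - d2 i) i,
              hA _ (by simp [τdeg_single_inr]),
              hA _ (by simp [τdeg_add, τdeg_single_inr, τdeg_single_inl]),
              hA _ (by simp [τdeg_single_inl]),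
              hsub', hsub', hsub']

lemma nf_mrg (p : S) : nf (mrg p) = Finsupp.single p 1 := by
  have hadm : ¬ ∃ i, 2 ≤ (mrg p) (Sum.inl i) := by
    rintro ⟨i, hi⟩
    rw [mrg_inl] at hi
    exact absurd (p.1.2 i) (by omega)
  have h' : ∀ i, splitL (mrg p) i ≤ 1 := by
    intro i; rw [splitL_mrg]; exact p.1.2 i
  rw [nf_of_admissible hadm h']
  congr 1
  refine Prod.ext ?_ (splitR_mrg p)
  exact Subtype.ext (splitL_mrg p)

/-- The normal-form linear map. -/
def N : Ppoly →ₗ[Rcoef] M := (MvPolynomial.basisMonomials (ℕ ⊕ ℕ) Rcoef).constr ℕ nf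

lemma N_monomial (σ : V) : N (monomial σ (1 : Rcoef)) = nf σ := by
  have h := (MvPolynomial.basisMonomials (ℕ ⊕ ℕ) Rcoef).constr_basis ℕ nf σ
  rwa [show (MvPolynomial.basisMonomials (ℕ ⊕ ℕ) Rcoef) σ = monomial σ 1 from by
    rw [coe_basisMonomials]] at h

lemma mono_mul_rel (σ : V) (i : ℕ) :
    (monomial σ (1 : Rcoef)) * huKrizRel i
      = monomial (σ + d2 i) 1
        - (uC • monomial (σ + ξ1 i) 1 + aC • monomial (σ + (ξ1 i + t1 0)) 1
          + aC • monomial (σ + t1 (i + 1)) 1) := by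
  have hr : huKrizRel i
      = tau i ^ 2 - (uC • xiv i + aC • (tau 0 * xiv i) + aC • tau (i + 1)) := by
    simp only [huKrizRel, add_mul, mul_assoc, C_mul', smul_mul_assoc]
  have m1 : (monomial σ (1 : Rcoef)) * tau i ^ 2 = monomial (σ + d2 i) 1 := by
    rw [tau, X_pow_eq_monomial, monomial_mul, mul_one]
  have m2 : (monomial σ (1 : Rcoef)) * xiv i = monomial (σ + ξ1 i) 1 := by
    rw [xiv, ← pow_one (X (Sum.inr i)), X_pow_eq_monomial, monomial_mul, mul_one]
  have m3 : (monomial σ (1 : Rcoef)) * (tau 0 * xiv i) = monomial (σ + (ξ1 i + t1 0)) 1 := by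
    rw [tau, xiv, ← pow_one (X (Sum.inl 0)), ← pow_one (X (Sum.inr i)),
      X_pow_eq_monomial, X_pow_eq_monomial, monomial_mul, monomial_mul, mul_one, mul_one,
      add_comm (t1 0) (ξ1 i)]
  have m4 : (monomial σ (1 : Rcoef)) * tau (i + 1) = monomial (σ + t1 (i + 1)) 1 := by
    rw [tau, ← pow_one (X (Sum.inl (i + 1))), X_pow_eq_monomial, monomial_mul, mul_one]
  rw [hr, mul_sub, mul_add, mul_add, mul_smul_comm, mul_smul_comm, mul_smul_comm,
    m1, m2, m3, m4]

lemma N_mono_mul_rel (σ : V) (i : ℕ) : N ((monomial σ (1 : Rcoef)) * huKrizRel i) = 0 := by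
  rw [mono_mul_rel, map_sub, map_add, map_add, map_smul, map_smul, map_smul,
    N_monomial, N_monomial, N_monomial, N_monomial]
  have h2 : 2 ≤ (σ + d2 i) (Sum.inl i) := by
    rw [Finsupp.add_apply, Finsupp.single_apply, if_pos rfl]; omega
  rw [nf_red _ i h2, add_tsub_cancel_right, red_def, sub_self]

lemma N_rel (i : ℕ) (q : Ppoly) : N (q * huKrizRel i) = 0 := by
  induction q using MvPolynomial.induction_on' with
  | monomial σ a =>
    rw [show (monomial σ a : Ppoly) = a • monomial σ 1 from by
        rw [smul_monomial, smul_eq_mul, mul_one],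
      smul_mul_assoc, map_smul, N_mono_mul_rel, smul_zero]
  | add p q hp hq => rw [add_mul, map_add, hp, hq, add_zero]

lemma N_ideal {x : Ppoly} (hx : x ∈ huKrizIdeal) : N x = 0 := by
  have key : ∀ q, N (q * x) = 0 := by
    refine Submodule.span_induction (p := fun x _ => ∀ q, N (q * x) = 0) ?_ ?_ ?_ ?_ hx
    · rintro y ⟨i, rfl⟩ q; exact N_rel i q
    · intro q; rw [mul_zero, map_zero]
    · intro y z _ _ hy hz q; rw [mul_add, map_add, hy, hz, add_zero]
    · intro c y _ hy q; rw [smul_eq_mul, ← mul_assoc, hy]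
  simpa using key 1

/-- the admissible monomial in `Ppoly` -/
def w (p : S) : Ppoly :=
  (p.1.1.prod fun i e => tau i ^ e) * (p.2.prod fun i k => xiv i ^ k)

lemma w_eq (p : S) : w p = monomial (mrg p) (1 : Rcoef) := by
  rw [monomial_eq, map_one, one_mul, mrg,
    Finsupp.prod_add_index' (fun a => pow_zero (X a)) (fun a b c => pow_add (X a) b c),
    Finsupp.prod_mapDomain_index_inj Sum.inl_injective,
    Finsupp.prod_mapDomain_index_inj Sum.inr_injective]
  rfl

abbrev Φ : Ppoly →ₐ[Rcoef] Aalg := Ideal.Quotient.mkₐ Rcoef huKrizIdeal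

/-- the admissible monomial in the quotient -/
def v (p : S) : Aalg := Φ (w p)

lemma N_w (p : S) : N (w p) = Finsupp.single p 1 := by
  rw [w_eq, N_monomial, nf_mrg]

lemma hli : LinearIndependent Rcoef v := by
  rw [linearIndependent_iff]
  intro l hl
  have hmem : Finsupp.linearCombination Rcoef w l ∈ huKrizIdeal := by
    rw [← Ideal.Quotient.eq_zero_iff_mem, ← Ideal.Quotient.mkₐ_eq_mk Rcoef,
      show (Φ (Finsupp.linearCombination Rcoef w l) : Aalg)
        = Finsupp.linearCombination Rcoef v l from
        Finsupp.apply_linearCombination Rcoef Φ.toLinearMap w l, hl]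
  have h0 : N (Finsupp.linearCombination Rcoef w l) = 0 := N_ideal hmem
  rw [Finsupp.apply_linearCombination Rcoef N w l] at h0
  have : Finsupp.linearCombination Rcoef (N ∘ w) l = l := by
    rw [Finsupp.linearCombination_apply]
    have : ∀ p ∈ l.support, l p • (N ∘ w) p = Finsupp.single p (l p) := by
      intro p _
      rw [Function.comp_apply, N_w, Finsupp.smul_single, smul_eq_mul, mul_one]
    rw [Finsupp.sum_congr this, Finsupp.sum_single]
  rw [this] at h0
  exact h0

lemma mono_mem_span (σ : V) :
    Φ (monomial σ 1) ∈ Submodule.span Rcoef (Set.range v) := by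
  suffices H : ∀ n (σ : V), τdeg σ ≤ n →
      Φ (monomial σ 1) ∈ Submodule.span Rcoef (Set.range v) from H (τdeg σ) σ le_rfl
  clear σ
  intro n
  induction n with
  | zero =>
    intro σ h0
    by_cases hex : ∃ i, 2 ≤ σ (Sum.inl i)
    · obtain ⟨i, hi⟩ := hex
      have := τdeg_sub_single hi
      omega
    · have h' : ∀ i, splitL σ i ≤ 1 := by
        intro i
        have : ¬ 2 ≤ σ (Sum.inl i) := fun hc => hex ⟨i, hc⟩
        simp only [splitL, Finsupp.comapDomain_apply]
        omega
      have : monomial σ (1 : Rcoef) = w ⟨⟨splitL σ, h'⟩, splitR σ⟩ := by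
        rw [w_eq, mrg_split]
      rw [this]
      exact Submodule.subset_span (Set.mem_range_self _)
  | succ n IH =>
    intro σ hτ
    by_cases hex : ∃ i, 2 ≤ σ (Sum.inl i)
    · obtain ⟨i, hi⟩ := hex
      have hmul := mono_mul_rel (σ - d2 i) i
      rw [sub_add_cancel' hi] at hmul
      have hrelmem : (monomial (σ - d2 i) (1 : Rcoef)) * huKrizRel i ∈ huKrizIdeal :=
        Ideal.mul_mem_left _ _ (Ideal.subset_span ⟨i, rfl⟩)
      have hzero : Φ ((monomial (σ - d2 i) (1 : Rcoef)) * huKrizRel i) = 0 := by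
        rw [Ideal.Quotient.mkₐ_eq_mk, Ideal.Quotient.eq_zero_iff_mem]
        exact hrelmem
      rw [hmul] at hzero
      have key : Φ (monomial σ (1 : Rcoef))
          = uC • Φ (monomial (σ - d2 i + ξ1 i) 1)
            + aC • Φ (monomial (σ - d2 i + (ξ1 i + t1 0)) 1)
            + aC • Φ (monomial (σ - d2 i + t1 (i + 1)) 1) := by
        rw [map_sub, map_add, map_add, map_smul, map_smul, map_smul, sub_eq_zero] at hzero
        exact hzero
      rw [key]
      have hd := τdeg_sub_single hi
      refine Submodule.add_mem _ (Submodule.add_mem _ ?_ ?_) ?_ <;>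
        refine Submodule.smul_mem _ _ (IH _ ?_)
      · rw [τdeg_add, τdeg_single_inr]; omega
      · rw [τdeg_add, τdeg_add, τdeg_single_inr, τdeg_single_inl]; omega
      · rw [τdeg_add, τdeg_single_inl]; omega
    · have h' : ∀ i, splitL σ i ≤ 1 := by
        intro i
        have : ¬ 2 ≤ σ (Sum.inl i) := fun hc => hex ⟨i, hc⟩
        simp only [splitL, Finsupp.comapDomain_apply]
        omega
      have : monomial σ (1 : Rcoef) = w ⟨⟨splitL σ, h'⟩, splitR σ⟩ := by
        rw [w_eq, mrg_split]
      rw [this]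
      exact Submodule.subset_span (Set.mem_range_self _)

lemma hsp : ⊤ ≤ Submodule.span Rcoef (Set.range v) := by
  intro x _
  obtain ⟨q, rfl⟩ := Ideal.Quotient.mkₐ_surjective Rcoef huKrizIdeal x
  induction q using MvPolynomial.induction_on' with
  | monomial σ a =>
    rw [show (monomial σ a : Ppoly) = a • monomial σ 1 from by
        rw [smul_monomial, smul_eq_mul, mul_one], map_smul]
    exact Submodule.smul_mem _ _ (mono_mem_span σ)
  | add p q hp hq =>
    rw [map_add]
    exact Submodule.add_mem _ (hp trivial) (hq trivial)

end HK

theorem stmt6 :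
    ∃ b : Module.Basis ({e : ℕ →₀ ℕ // ∀ i, e i ≤ 1} × (ℕ →₀ ℕ)) Rcoef Aalg,
      ∀ p : {e : ℕ →₀ ℕ // ∀ i, e i ≤ 1} × (ℕ →₀ ℕ),
        b p = Ideal.Quotient.mk huKrizIdeal
          ((p.1.1.prod fun i e => tau i ^ e) *
            (p.2.prod fun i k => xiv i ^ k)) := by
  refine ⟨Module.Basis.mk HK.hli HK.hsp, fun p => ?_⟩
  rw [Module.Basis.mk_apply]
  simp [HK.v, HK.w, HK.Φ, Ideal.Quotient.mkₐ_eq_mk]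

end
end

section
/- Let S be a commutative ring, t an element of S, and M an S-module. If M is t-torsion-free and the natural square with vertices M, M[t^{-1}], M^\wedge_t (the t-adic completion), and M^\wedge_t[t^{-1}] commutes, then under the hypothesis that M is finitely generated over a Noetherian S, the square is a pullback: M is the fiber product of M[t^{-1}] and M^\wedge_t over M^\wedge_t[t^{-1}]. -/
/-!
STATEMENT 10 (arithmetic fracture / Tate square): let `S` be a Noetherian
commutative ring, `t : S`, and `M` a finitely generated `S`-module with no
`t`-torsion.  Then the commutative square with vertices `M`, `M[t⁻¹]`,
`M^∧_t` (the `t`-adic completion) and `M^∧_t[t⁻¹]` is a pullback: for every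
compatible pair `(x, y) ∈ M[t⁻¹] × M^∧_t` there is a unique `m : M`
mapping to it.
-/

open Pointwise

/-- If `M` has no `t`-torsion, neither does its `t`-adic completion. -/
lemma adic_tf {S : Type*} [CommRing S] (t : S) {M : Type*} [AddCommGroup M] [Module S M]
    (htf : ∀ m : M, t • m = 0 → m = 0)
    (z : AdicCompletion (Ideal.span {t}) M) (hz : t • z = 0) : z = 0 := by
  obtain ⟨a, rfl⟩ := AdicCompletion.mk_surjective (Ideal.span {t}) M z
  rw [← map_smul] at hz
  have hmem : ∀ n : ℕ, t • (a : ℕ → M) n ∈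
      ((Ideal.span {t}) ^ n • ⊤ : Submodule S M) := by
    intro n
    have := congrArg (fun w => w.val n) hz
    simp only [AdicCompletion.mk_apply_coe, AdicCompletion.val_zero,
      Submodule.mkQ_apply] at this
    rw [← Submodule.Quotient.mk_eq_zero]
    simpa using this
  apply AdicCompletion.mk_zero_of
  refine ⟨0, fun n _ => ⟨n + 1, by omega, n, by omega, ?_⟩⟩
  have h1 := hmem (n + 1)
  rw [Ideal.span_singleton_pow, Submodule.ideal_span_singleton_smul,
    ← SetLike.mem_coe, Submodule.coe_pointwise_smul] at h1
  obtain ⟨w, -, hw⟩ := h1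
  have : t • ((a : ℕ → M) (n + 1) - t ^ n • w) = 0 := by
    rw [smul_sub, ← hw, ← mul_smul, ← pow_succ', sub_self]
  have h2 := htf _ this
  rw [sub_eq_zero] at h2
  rw [Ideal.span_singleton_pow, Submodule.ideal_span_singleton_smul, h2]
  exact Submodule.smul_mem_pointwise_smul _ _ _ Submodule.mem_top

theorem stmt10 {S : Type*} [CommRing S] [IsNoetherianRing S] (t : S)
    {M : Type*} [AddCommGroup M] [Module S M] [Module.Finite S M]
    (htf : ∀ m : M, t • m = 0 → m = 0)
    (x : LocalizedModule (Submonoid.powers t) M)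
    (y : AdicCompletion (Ideal.span {t}) M)
    (hcompat :
      IsLocalizedModule.map (Submonoid.powers t)
        (LocalizedModule.mkLinearMap (Submonoid.powers t) M)
        (LocalizedModule.mkLinearMap (Submonoid.powers t)
          (AdicCompletion (Ideal.span {t}) M))
        (AdicCompletion.of (Ideal.span {t}) M) x =
      LocalizedModule.mkLinearMap (Submonoid.powers t)
        (AdicCompletion (Ideal.span {t}) M) y) :
    ∃! m : M,
      LocalizedModule.mkLinearMap (Submonoid.powers t) M m = x ∧
      AdicCompletion.of (Ideal.span {t}) M m = y := by
  -- torsion-freeness for powers of t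
  have htf' : ∀ (j : ℕ) (d : M), t ^ j • d = 0 → d = 0 := by
    intro j
    induction j with
    | zero => intro d hd; simpa using hd
    | succ j ih =>
      intro d hd
      have : t ^ j • (t • d) = 0 := by
        rw [← mul_smul, ← pow_succ]; exact hd
      exact htf d (ih _ this)
  -- torsion-freeness of the adic completion, for powers of t
  have htfC : ∀ (j : ℕ) (z : AdicCompletion (Ideal.span {t}) M),
      t ^ j • z = 0 → z = 0 := by
    intro j
    induction j with
    | zero => intro z hz; simpa using hz
    | succ j ih =>
      intro z hz
      have : t ^ j • (t • z) = 0 := by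
        rw [← mul_smul, ← pow_succ]; exact hz
      exact adic_tf t htf z (ih _ this)
  -- uniqueness
  have huniq : ∀ m₁ m₂ : M,
      LocalizedModule.mkLinearMap (Submonoid.powers t) M m₁ =
        LocalizedModule.mkLinearMap (Submonoid.powers t) M m₂ → m₁ = m₂ := by
    intro m₁ m₂ h
    rw [LocalizedModule.mkLinearMap_apply, LocalizedModule.mkLinearMap_apply,
      LocalizedModule.mk_eq] at h
    obtain ⟨u, hu⟩ := h
    obtain ⟨j, hj⟩ := u.2
    simp only [one_smul] at hu
    have : t ^ j • (m₁ - m₂) = 0 := by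
      rw [smul_sub, sub_eq_zero]
      simpa [hj, Submonoid.smul_def] using hu
    have := htf' j _ this
    rwa [sub_eq_zero] at this
  -- existence
  induction x using LocalizedModule.induction_on with
  | _ m₀ s =>
    obtain ⟨n, hn⟩ := s.2
    have hn' : (s : S) = t ^ n := hn.symm
    rw [IsLocalizedModule.map_LocalizedModules, LocalizedModule.mkLinearMap_apply,
      LocalizedModule.mk_eq] at hcompat
    obtain ⟨u, hu⟩ := hcompat
    obtain ⟨k, hk⟩ := u.2
    have hk' : (u : S) = t ^ k := hk.symm
    simp only [one_smul] at hu
    have h2 : (u : S) • (AdicCompletion.of (Ideal.span {t}) M) m₀ =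
        (u : S) • (s : S) • y := by
      simpa [Submonoid.smul_def] using hu
    have key : AdicCompletion.of (Ideal.span {t}) M (t ^ k • m₀) = t ^ (k + n) • y := by
      rw [LinearMap.map_smul, pow_add, mul_smul, ← hk', ← hn']
      exact h2
    -- t^(k+n) • y maps to zero in M ⧸ I^(k+n) • ⊤, hence t^k • m₀ ∈ I^(k+n) • ⊤
    have hpow : t ^ (k + n) ∈ (Ideal.span {t}) ^ (k + n) :=
      Ideal.pow_mem_pow (Ideal.mem_span_singleton_self t) _
    have hmem : t ^ k • m₀ ∈
        ((Ideal.span {t}) ^ (k + n) • ⊤ : Submodule S M) := by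
      rw [← Submodule.Quotient.mk_eq_zero]
      have he : AdicCompletion.eval (Ideal.span {t}) M (k + n)
          (AdicCompletion.of (Ideal.span {t}) M (t ^ k • m₀)) = 0 := by
        rw [key, LinearMap.map_smul]
        obtain ⟨w, hw⟩ := Submodule.Quotient.mk_surjective _
          (AdicCompletion.eval (Ideal.span {t}) M (k + n) y)
        rw [← hw, ← Submodule.Quotient.mk_smul, Submodule.Quotient.mk_eq_zero]
        exact Submodule.smul_mem_smul hpow Submodule.mem_top
      rwa [AdicCompletion.eval_of, Submodule.mkQ_apply] at he
    rw [Ideal.span_singleton_pow, Submodule.ideal_span_singleton_smul,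
      ← SetLike.mem_coe, Submodule.coe_pointwise_smul] at hmem
    obtain ⟨m, -, hm0⟩ := hmem
    have hm : t ^ (k + n) • m = t ^ k • m₀ := hm0
    refine ⟨m, ⟨?_, ?_⟩, ?_⟩
    · rw [LocalizedModule.mkLinearMap_apply, LocalizedModule.mk_eq]
      refine ⟨u, ?_⟩
      rw [one_smul]
      have : (u : S) • (s : S) • m = (u : S) • m₀ := by
        rw [hk', hn', ← mul_smul, ← pow_add, hm]
      simpa [Submonoid.smul_def] using this
    · have h3 : t ^ (k + n) • (AdicCompletion.of (Ideal.span {t}) M m - y) = 0 := by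
        rw [smul_sub, ← LinearMap.map_smul, hm, key, sub_self]
      have := htfC _ _ h3
      rwa [sub_eq_zero] at this
    · intro m' hm'
      obtain ⟨hm'1, -⟩ := hm'
      apply huniq
      rw [hm'1, LocalizedModule.mkLinearMap_apply, LocalizedModule.mk_eq]
      refine ⟨u, ?_⟩
      rw [one_smul]
      have : (u : S) • (s : S) • m = (u : S) • m₀ := by
        rw [hk', hn', ← mul_smul, ← pow_add, hm]
      simpa [Submonoid.smul_def] using this.symm
end
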